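/- Let (L, [·,·], ρ) be a Lie–Rinehart algebra over R and ∇ : Der(R) × L → L a connection. Then the curvature of the basic connection on L is the basic curvature composed with the anchor: for all a₁, a₂, a₃ ∈ L, ∇ᵇᵃˢ_{a₁}∇ᵇᵃˢ_{a₂}a₃ − ∇ᵇᵃˢ_{a₂}∇ᵇᵃˢ_{a₁}a₃ − ∇ᵇᵃˢ_{[a₁,a₂]}a₃ = Rᵇᵃˢ_∇(a₁,a₂)(ρ(a₃)). -/
import Mathlib


/-- A Lie–Rinehart algebra over a commutative `ℝ`-algebra `R`: an `R`-module `L`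
with an `ℝ`-bilinear Lie bracket and an `R`-linear anchor `ρ : L → Der(R)` which is a
morphism of Lie algebras and satisfies the Leibniz rule. -/
structure LieRinehart (R : Type*) [CommRing R] [Algebra ℝ R]
    (L : Type*) [AddCommGroup L] [Module R L] where
  bracket : L → L → L
  bracket_add_left : ∀ x y z : L, bracket (x + y) z = bracket x z + bracket y z
  bracket_add_right : ∀ x y z : L, bracket x (y + z) = bracket x y + bracket x z
  bracket_real_left : ∀ (r : ℝ) (x y : L),
    bracket ((algebraMap ℝ R r) • x) y = (algebraMap ℝ R r) • bracket x y
  bracket_real_right : ∀ (r : ℝ) (x y : L),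
    bracket x ((algebraMap ℝ R r) • y) = (algebraMap ℝ R r) • bracket x y
  bracket_antisymm : ∀ x y : L, bracket x y = - bracket y x
  bracket_jacobi : ∀ x y z : L,
    bracket x (bracket y z) = bracket (bracket x y) z + bracket y (bracket x z)
  anchor : L →ₗ[R] Derivation ℝ R R
  anchor_bracket : ∀ x y : L, anchor (bracket x y) = ⁅anchor x, anchor y⁆
  leibniz : ∀ (f : R) (x y : L),
    bracket x (f • y) = f • bracket x y + (anchor x f) • y

/-- A connection on the `R`-module `E` along `Der(R)`. -/
structure DerConnection (R : Type*) [CommRing R] [Algebra ℝ R]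
    (E : Type*) [AddCommGroup E] [Module R E] where
  conn : Derivation ℝ R R → E → E
  conn_add_left : ∀ (X Y : Derivation ℝ R R) (e : E), conn (X + Y) e = conn X e + conn Y e
  conn_add_right : ∀ (X : Derivation ℝ R R) (e e' : E), conn X (e + e') = conn X e + conn X e'
  conn_smul_left : ∀ (f : R) (X : Derivation ℝ R R) (e : E), conn (f • X) e = f • conn X e
  conn_leibniz : ∀ (f : R) (X : Derivation ℝ R R) (e : E),
    conn X (f • e) = f • conn X e + (X f) • e

variable {R : Type*} [CommRing R] [Algebra ℝ R]
variable {L : Type*} [AddCommGroup L] [Module R L]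

/-- The curvature `R_∇(X,Y)e = ∇_X ∇_Y e − ∇_Y ∇_X e − ∇_{[X,Y]} e` of a connection. -/
def DerConnection.curv {E : Type*} [AddCommGroup E] [Module R E]
    (N : DerConnection R E) (X Y : Derivation ℝ R R) (e : E) : E :=
  N.conn X (N.conn Y e) - N.conn Y (N.conn X e) - N.conn ⁅X, Y⁆ e

/-- The basic connection `∇ᵇᵃˢ : L × L → L`, `∇ᵇᵃˢ_a a' = [a,a'] + ∇_{ρ(a')} a`. -/
def basL (LR : LieRinehart R L) (N : DerConnection R L) (a a' : L) : L :=
  LR.bracket a a' + N.conn (LR.anchor a') a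

/-- The basic connection `∇ᵇᵃˢ : L × Der(R) → Der(R)`, `∇ᵇᵃˢ_a X = [ρ(a),X] + ρ(∇_X a)`. -/
def basD (LR : LieRinehart R L) (N : DerConnection R L) (a : L) (X : Derivation ℝ R R) :
    Derivation ℝ R R :=
  ⁅LR.anchor a, X⁆ + LR.anchor (N.conn X a)

/-- The basic curvature `Rᵇᵃˢ_∇ : L × L × Der(R) → L`. -/
def basCurv (LR : LieRinehart R L) (N : DerConnection R L) (a₁ a₂ : L)
    (X : Derivation ℝ R R) : L :=
  - N.conn X (LR.bracket a₁ a₂) + LR.bracket (N.conn X a₁) a₂ + LR.bracket a₁ (N.conn X a₂)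
    + N.conn (basD LR N a₂ X) a₁ - N.conn (basD LR N a₁ X) a₂

/-- The curvature of the basic connection on `L` is the basic curvature
composed with the anchor. -/
theorem basic_connection_curvature_on_L
    (LR : LieRinehart R L) (N : DerConnection R L) :
    ∀ a₁ a₂ a₃ : L,
      basL LR N a₁ (basL LR N a₂ a₃) - basL LR N a₂ (basL LR N a₁ a₃)
        - basL LR N (LR.bracket a₁ a₂) a₃
      = basCurv LR N a₁ a₂ (LR.anchor a₃) := by
  intro a₁ a₂ a₃
  simp only [basL, basCurv, basD, map_add, LR.anchor_bracket, N.conn_add_left,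
    LR.bracket_add_right]
  have hJ := LR.bracket_jacobi a₁ a₂ a₃
  have hA := LR.bracket_antisymm a₂ (N.conn (LR.anchor a₃) a₁)
  rw [hJ, hA]
  abel
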